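/- Let n ≥ 1 and let S ∈ Mat_n(ℂ)((x)) be an indecomposable solution whose semisimple part S⁰ is nonzero with ord S⁰ < 0. Then ord S⁰ = −1, deg p = deg q + 2, and the coefficient of x^{−1} in S⁰ equals −(leading coefficient of q)/(leading coefficient of p). -/

import Mathlib

noncomputable def lderiv {R : Type*} [Ring R] (S : LaurentSeries R) : LaurentSeries R :=
  { coeff := fun i => (i + 1) • S.coeff (i + 1)
    isPWO_support' := by
      have h : Function.support (fun i : ℤ => (i + 1) • S.coeff (i + 1)) ⊆
          (fun i : ℤ => i - 1) '' S.support := by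
        intro i hi
        have hne : S.coeff (i + 1) ≠ 0 := by
          intro h0
          apply hi
          simp [h0]
        exact ⟨i + 1, hne, by ring⟩
      exact (S.isPWO_support'.image_of_monotone
        (fun a b hab => by simpa using hab : Monotone (fun i : ℤ => i - 1))).mono h }

/-- `S` is a "solution", i.e. corresponds to an `n`-dimensional
vertex algebra `(ℂ(s), (p/q) d/ds)`-module. -/
def IsSolution (p q : Polynomial ℂ) {n : ℕ}
    (S : LaurentSeries (Matrix (Fin n) (Fin n) ℂ)) : Prop :=
  (∀ α : ℂ, IsUnit (S - algebraMap ℂ (LaurentSeries (Matrix (Fin n) (Fin n) ℂ)) α)) ∧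
  (∀ i j : ℤ, Commute (S.coeff i) (S.coeff j)) ∧
  Polynomial.aeval S q * lderiv S = Polynomial.aeval S p

/-- Indecomposability of the corresponding module `ℂⁿ`: no direct sum decomposition
into two nonzero subspaces stable under all coefficients of `S`. -/
def Indecomp {n : ℕ} (S : LaurentSeries (Matrix (Fin n) (Fin n) ℂ)) : Prop :=
  ¬ ∃ U W : Submodule ℂ (Fin n → ℂ), U ≠ ⊥ ∧ W ≠ ⊥ ∧ U ⊓ W = ⊥ ∧ U ⊔ W = ⊤ ∧
    (∀ i : ℤ, ∀ v ∈ U, (S.coeff i).mulVec v ∈ U) ∧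
    (∀ i : ℤ, ∀ v ∈ W, (S.coeff i).mulVec v ∈ W)

/-- `S0` is the semisimple part of `S`: each coefficient of `S0` is the unique
eigenvalue of the corresponding coefficient of `S`. -/
def IsSemisimplePart {n : ℕ} (S : LaurentSeries (Matrix (Fin n) (Fin n) ℂ))
    (S0 : LaurentSeries ℂ) : Prop :=
  ∀ i : ℤ, IsNilpotent (S.coeff i - S0.coeff i • (1 : Matrix (Fin n) (Fin n) ℂ))

/-- The nilpotent `n × n` Jordan block with ones on the superdiagonal. -/
def Jn (n : ℕ) : Matrix (Fin n) (Fin n) ℂ :=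
  Matrix.of fun i j => if (i : ℕ) + 1 = (j : ℕ) then 1 else 0


namespace Stmt8Aux

open HahnSeries Polynomial

lemma lderiv_coeff {R : Type*} [Ring R] (S : LaurentSeries R) (i : ℤ) :
    (lderiv S).coeff i = (i + 1) • S.coeff (i + 1) := rfl

lemma coeff_sum {R α : Type*} [Ring R] (s : Finset α) (F : α → LaurentSeries R) (i : ℤ) :
    (∑ a ∈ s, F a).coeff i = ∑ a ∈ s, (F a).coeff i := by
  classical
  induction s using Finset.induction_on with
  | empty => simp
  | @insert a s ha ih => rw [Finset.sum_insert ha, Finset.sum_insert ha, HahnSeries.coeff_add, ih]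

variable {A B : Type*} [Ring A] [Ring B] [Algebra ℂ A] [Algebra ℂ B]

lemma hmap_mul (f : A →ₐ[ℂ] B) (X Y : LaurentSeries A) :
    (X * Y).map f = (X.map f) * (Y.map f) :=
  HahnSeries.map_mul (Γ := ℤ) ((f : A →+* B) : A →ₙ+* B) (x := X) (y := Y)

lemma hmap_one (f : A →ₐ[ℂ] B) : (1 : LaurentSeries A).map f = 1 := by
  ext i
  simp [HahnSeries.map_coeff, HahnSeries.coeff_one, apply_ite f]

lemma hmap_add (f : A →ₐ[ℂ] B) (X Y : LaurentSeries A) :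
    (X + Y).map f = X.map f + Y.map f := by
  ext i
  simp [HahnSeries.map_coeff, HahnSeries.coeff_add]

lemma hmap_pow (f : A →ₐ[ℂ] B) (X : LaurentSeries A) (k : ℕ) :
    (X ^ k).map f = (X.map f) ^ k := by
  induction k with
  | zero => simpa using hmap_one f
  | succ k ih => rw [pow_succ, pow_succ, hmap_mul, ih]

lemma hmap_smul (f : A →ₐ[ℂ] B) (c : ℂ) (X : LaurentSeries A) :
    (c • X).map f = c • (X.map f) := by
  ext i
  simp [HahnSeries.map_coeff, HahnSeries.coeff_smul]

lemma hmap_sum {α : Type*} (f : A →ₐ[ℂ] B) (s : Finset α) (F : α → LaurentSeries A) :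
    (∑ a ∈ s, F a).map f = ∑ a ∈ s, (F a).map f := by
  ext i
  simp [HahnSeries.map_coeff, coeff_sum]

lemma hmap_aeval (f : A →ₐ[ℂ] B) (X : LaurentSeries A) (g : Polynomial ℂ) :
    (Polynomial.aeval X g).map f = Polynomial.aeval (X.map f) g := by
  rw [Polynomial.aeval_eq_sum_range, Polynomial.aeval_eq_sum_range, hmap_sum]
  exact Finset.sum_congr rfl fun j _ => by rw [hmap_smul, hmap_pow]

lemma hmap_lderiv (f : A →ₐ[ℂ] B) (X : LaurentSeries A) :
    (lderiv X).map f = lderiv (X.map f) := by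
  ext i
  simp [HahnSeries.map_coeff, lderiv_coeff]

lemma hmap_inj (f : A →ₐ[ℂ] B) (hf : Function.Injective f) {X Y : LaurentSeries A}
    (h : X.map f = Y.map f) : X = Y := by
  ext i
  have := congrArg (fun Z : LaurentSeries B => Z.coeff i) h
  simpa [HahnSeries.map_coeff] using hf this

lemma order_eq_of {f : LaurentSeries ℂ} {i : ℤ} (h1 : f.coeff i ≠ 0)
    (h2 : ∀ j < i, f.coeff j = 0) : f.order = i := by
  have hfne : f ≠ 0 := fun h => h1 (by simp [h])
  refine le_antisymm (HahnSeries.order_le_of_coeff_ne_zero h1) ?_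
  by_contra h
  exact (mt HahnSeries.coeff_order_eq_zero.mp hfne) (h2 _ (lt_of_not_ge h))

lemma lc_mul {x y : LaurentSeries ℂ} (hx : x ≠ 0) (hy : y ≠ 0) :
    (x * y).leadingCoeff = x.leadingCoeff * y.leadingCoeff := by
  rw [HahnSeries.leadingCoeff_eq, HahnSeries.order_mul hx hy,
    HahnSeries.coeff_mul_order_add_order]

lemma lc_pow (f : LaurentSeries ℂ) (hf : f ≠ 0) (k : ℕ) :
    (f ^ k).leadingCoeff = f.leadingCoeff ^ k := by
  induction k with
  | zero => simp [HahnSeries.leadingCoeff_one]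
  | succ k ih => rw [pow_succ, pow_succ, lc_mul (pow_ne_zero _ hf) hf, ih]

lemma order_pow' (f : LaurentSeries ℂ) (k : ℕ) : (f ^ k).order = (k : ℤ) * f.order := by
  rw [HahnSeries.order_pow]
  exact nsmul_eq_mul _ _

lemma aeval_expand (g : Polynomial ℂ) (f : LaurentSeries ℂ) :
    Polynomial.aeval f g = ∑ j ∈ Finset.range (g.natDegree + 1), g.coeff j • f ^ j := by
  rw [Polynomial.aeval_eq_sum_range]
  refine Finset.sum_congr rfl fun j _ => ?_
  rw [Algebra.smul_def]
  have h : algebraMap ℂ (LaurentSeries ℂ) (g.coeff j) = HahnSeries.C (g.coeff j) := by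
    rw [HahnSeries.algebraMap_apply', PowerSeries.algebraMap_apply, HahnSeries.ofPowerSeries_C,
      Algebra.algebraMap_self_apply]
  rw [h, HahnSeries.C_mul_eq_smul]

/-- coefficient of `aeval f g` at the bottom spot, and vanishing below it. -/
lemma aeval_bot (g : Polynomial ℂ) (hg : g ≠ 0) (f : LaurentSeries ℂ) (hf : f ≠ 0)
    (ho : f.order < 0) :
    (Polynomial.aeval f g).coeff ((g.natDegree : ℤ) * f.order)
      = g.leadingCoeff * f.leadingCoeff ^ g.natDegree ∧
    ∀ i < (g.natDegree : ℤ) * f.order, (Polynomial.aeval f g).coeff i = 0 := by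
  set o := f.order with ho_def
  set m := g.natDegree with hm_def
  have hvan : ∀ (j : ℕ) (i : ℤ), i < (j : ℤ) * o → (f ^ j).coeff i = 0 := by
    intro j i hi
    apply HahnSeries.coeff_eq_zero_of_lt_order
    rwa [order_pow']
  have hmono : ∀ j : ℕ, j ≤ m → (m : ℤ) * o ≤ (j : ℤ) * o := by
    intro j hj
    apply mul_le_mul_of_nonpos_right _ (le_of_lt ho)
    exact_mod_cast hj
  rw [aeval_expand]
  constructor
  · rw [coeff_sum]
    rw [Finset.sum_eq_single m]
    · rw [HahnSeries.coeff_smul, smul_eq_mul]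
      have h1 : (f ^ m).coeff ((m : ℤ) * o) = f.leadingCoeff ^ m := by
        rw [← lc_pow f hf, HahnSeries.leadingCoeff_eq, order_pow']
      rw [h1, Polynomial.leadingCoeff]
    · intro j hj hjm
      rw [HahnSeries.coeff_smul, hvan j _ ?_, smul_zero]
      have hjm' : j < m := by
        have := Finset.mem_range.mp hj
        omega
      have : (m : ℤ) * o < (j : ℤ) * o := by
        apply mul_lt_mul_of_neg_right _ ho
        exact_mod_cast hjm'
      exact this
    · intro h
      exact absurd (Finset.mem_range.mpr (Nat.lt_succ_self m)) h
  · intro i hi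
    rw [coeff_sum]
    apply Finset.sum_eq_zero
    intro j hj
    rw [HahnSeries.coeff_smul, hvan j i ?_, smul_zero]
    have hjm : j ≤ m := Nat.lt_succ_iff.mp (Finset.mem_range.mp hj)
    exact lt_of_lt_of_le hi (hmono j hjm)

lemma scalar_case (p q : Polynomial ℂ) (hp : p ≠ 0) (hq : q ≠ 0)
    (f : LaurentSeries ℂ) (hfne : f ≠ 0) (hord : f.order < 0)
    (heq : Polynomial.aeval f q * lderiv f = Polynomial.aeval f p) :
    f.order = -1 ∧ p.natDegree = q.natDegree + 2 ∧
      f.coeff (-1) = - q.leadingCoeff / p.leadingCoeff := by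
  set o := f.order with ho_def
  set c := f.leadingCoeff with hc_def
  have hc : c ≠ 0 := HahnSeries.leadingCoeff_ne_zero.mpr hfne
  set m := p.natDegree
  set k := q.natDegree
  have hqlc : q.leadingCoeff ≠ 0 := Polynomial.leadingCoeff_ne_zero.mpr hq
  have hplc : p.leadingCoeff ≠ 0 := Polynomial.leadingCoeff_ne_zero.mpr hp
  obtain ⟨hA1, hA2⟩ := aeval_bot p hp f hfne hord
  obtain ⟨hB1, hB2⟩ := aeval_bot q hq f hfne hord
  set A := Polynomial.aeval f p with hA_def
  set B := Polynomial.aeval f q with hB_def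
  have hAne : A ≠ 0 := by
    intro h
    rw [h] at hA1
    simp only [HahnSeries.coeff_zero] at hA1
    exact (mul_ne_zero hplc (pow_ne_zero _ hc)) hA1.symm
  have hBne : B ≠ 0 := by
    intro h
    rw [h] at hB1
    simp only [HahnSeries.coeff_zero] at hB1
    exact (mul_ne_zero hqlc (pow_ne_zero _ hc)) hB1.symm
  have hAord : A.order = (m : ℤ) * o :=
    order_eq_of (by rw [hA1]; exact mul_ne_zero hplc (pow_ne_zero _ hc)) hA2
  have hBord : B.order = (k : ℤ) * o :=
    order_eq_of (by rw [hB1]; exact mul_ne_zero hqlc (pow_ne_zero _ hc)) hB2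
  -- the log derivative
  set L := lderiv f with hL_def
  have hLcoeff : L.coeff (o - 1) = (o : ℂ) * c := by
    rw [hL_def, lderiv_coeff, sub_add_cancel, zsmul_eq_mul]
    congr 1
    rw [hc_def, HahnSeries.leadingCoeff_eq]
  have honez : (o : ℂ) ≠ 0 := Int.cast_ne_zero.mpr (ne_of_lt hord)
  have hLne' : L.coeff (o - 1) ≠ 0 := by rw [hLcoeff]; exact mul_ne_zero honez hc
  have hLvan : ∀ j < o - 1, L.coeff j = 0 := by
    intro j hj
    rw [hL_def, lderiv_coeff, HahnSeries.coeff_eq_zero_of_lt_order (by omega), smul_zero]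
  have hLord : L.order = o - 1 := order_eq_of hLne' hLvan
  have hLne : L ≠ 0 := fun h => hLne' (by simp [h])
  -- orders
  have hordEq : (m : ℤ) * o = (k : ℤ) * o + (o - 1) := by
    rw [← hAord, ← heq, HahnSeries.order_mul hBne hLne, hBord, hLord]
  have hoeq : o = -1 := by
    have h1 : o * (-((m : ℤ) - k - 1)) = 1 := by ring_nf; linarith
    rcases Int.isUnit_iff.mp (IsUnit.of_mul_eq_one _ h1) with h | h
    · omega
    · exact h
  have hmk : m = k + 2 := by
    rw [hoeq] at hordEq
    omega
  -- leading coefficients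
  have hlcL : L.leadingCoeff = (o : ℂ) * c := by
    rw [HahnSeries.leadingCoeff_eq, hLord, hLcoeff]
  have hlcA : A.leadingCoeff = p.leadingCoeff * c ^ m := by
    rw [HahnSeries.leadingCoeff_eq, hAord, hA1]
  have hlcB : B.leadingCoeff = q.leadingCoeff * c ^ k := by
    rw [HahnSeries.leadingCoeff_eq, hBord, hB1]
  have hlcEq : p.leadingCoeff * c ^ m = (q.leadingCoeff * c ^ k) * ((o : ℂ) * c) := by
    rw [← hlcA, ← hlcB, ← hlcL, ← heq, lc_mul hBne hLne]
  rw [hoeq, hmk] at hlcEq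
  have hcancel : p.leadingCoeff * c = - q.leadingCoeff := by
    have h2 : (p.leadingCoeff * c) * c ^ (k + 1) = (- q.leadingCoeff) * c ^ (k + 1) := by
      push_cast at hlcEq
      ring_nf at hlcEq ⊢
      linear_combination hlcEq
    exact mul_right_cancel₀ (pow_ne_zero _ hc) h2
  have hcoeff : f.coeff (-1) = c := by
    rw [hc_def, HahnSeries.leadingCoeff_eq, ← hoeq]
  refine ⟨hoeq, hmk, ?_⟩
  rw [hcoeff, eq_div_iff hplc]
  linear_combination hcancel

lemma aeval_bridge (f : LaurentSeries ℂ) (g : Polynomial ℂ) :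
    @Polynomial.aeval ℂ (HahnSeries ℤ ℂ) Complex.instCommSemiring HahnSeries.instSemiring
      HahnSeries.instAlgebra f g = Polynomial.aeval f g := by
  have hmaps : (@algebraMap ℂ (HahnSeries ℤ ℂ) Complex.instCommSemiring HahnSeries.instSemiring
      HahnSeries.instAlgebra) = algebraMap ℂ (LaurentSeries ℂ) := by
    apply RingHom.ext
    intro c
    have h1 : (@algebraMap ℂ (HahnSeries ℤ ℂ) Complex.instCommSemiring HahnSeries.instSemiring
        HahnSeries.instAlgebra) c = HahnSeries.C c := by
      rw [show (@algebraMap ℂ (HahnSeries ℤ ℂ) Complex.instCommSemiring HahnSeries.instSemiring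
        HahnSeries.instAlgebra) c = HahnSeries.C ((algebraMap ℂ ℂ) c) from rfl]
      simp
    have h2 : algebraMap ℂ (LaurentSeries ℂ) c = HahnSeries.C c := by
      rw [HahnSeries.algebraMap_apply', PowerSeries.algebraMap_apply,
        HahnSeries.ofPowerSeries_C]
      simp
    rw [h1, h2]
  rw [@Polynomial.aeval_def ℂ (HahnSeries ℤ ℂ) Complex.instCommSemiring HahnSeries.instSemiring
    HahnSeries.instAlgebra f g, Polynomial.aeval_def, hmaps]

lemma trace_eq {n : ℕ} {A : Matrix (Fin n) (Fin n) ℂ} {l : ℂ}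
    (h : IsNilpotent (A - l • 1)) : A.trace = n * l := by
  have h0 : (A - l • 1).trace = 0 := (Matrix.isNilpotent_trace_of_isNilpotent h).eq_zero
  rw [Matrix.trace_sub, Matrix.trace_smul, Matrix.trace_one, sub_eq_zero] at h0
  rw [h0]
  simp [Fintype.card_fin, smul_eq_mul, mul_comm]

end Stmt8Aux

/-- an indecomposable solution whose (nonzero) semisimple part has
negative order satisfies: `ord S⁰ = -1`, `deg p = deg q + 2`, and the coefficient
of `x⁻¹` in `S⁰` is `-(lc q)/(lc p)`. -/
theorem stmt_8 (p q : Polynomial ℂ) (hp : p ≠ 0) (hq : q ≠ 0) (hpq : IsCoprime p q)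
    (n : ℕ) (hn : 1 ≤ n) (S : LaurentSeries (Matrix (Fin n) (Fin n) ℂ))
    (hS : IsSolution p q S) (hind : Indecomp S)
    (S0 : LaurentSeries ℂ) (hS0 : IsSemisimplePart S S0)
    (hne : S0 ≠ 0) (hord : S0.order < 0) :
    S0.order = -1 ∧
    p.natDegree = q.natDegree + 2 ∧
    S0.coeff (-1) = - q.leadingCoeff / p.leadingCoeff := by
  classical
  obtain ⟨-, hcomm, heq⟩ := hS
  have hnc : (n : ℂ) ≠ 0 := Nat.cast_ne_zero.mpr (by omega)
  set M := Matrix (Fin n) (Fin n) ℂ with hMdef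
  let 𝒜 : Subalgebra ℂ M := Algebra.adjoin ℂ (Set.range S.coeff)
  have hmemS : ∀ i, S.coeff i ∈ 𝒜 := fun i => Algebra.subset_adjoin ⟨i, rfl⟩
  have hC : ∀ a ∈ 𝒜, ∀ b ∈ 𝒜, Commute a b := by
    intro a ha b hb
    refine Algebra.commute_of_mem_adjoin_of_forall_mem_commute hb ?_
    rintro x ⟨j, rfl⟩
    exact (Algebra.commute_of_mem_adjoin_of_forall_mem_commute ha
      (by rintro y ⟨i, rfl⟩; exact hcomm j i)).symm
  let φ : M → ℂ := fun A => A.trace / n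
  have keyφ : ∀ (A : M) (l : ℂ), IsNilpotent (A - l • 1) → φ A = l := by
    intro A l h
    show A.trace / n = l
    rw [Stmt8Aux.trace_eq h, mul_div_cancel_left₀ _ hnc]
  have hex : ∀ a ∈ 𝒜, ∃ l : ℂ, IsNilpotent (a - l • (1 : M)) := by
    intro a ha
    induction ha using Algebra.adjoin_induction with
    | mem x hx =>
        obtain ⟨i, rfl⟩ := hx
        exact ⟨S0.coeff i, hS0 i⟩
    | algebraMap r =>
        refine ⟨r, ?_⟩
        rw [Algebra.algebraMap_eq_smul_one, sub_self]
        exact IsNilpotent.zero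
    | add x y hx hy ihx ihy =>
        obtain ⟨l, hl⟩ := ihx
        obtain ⟨m, hm⟩ := ihy
        refine ⟨l + m, ?_⟩
        have hcomm' : Commute (x - l • 1) (y - m • 1) :=
          hC _ (sub_mem hx (SMulMemClass.smul_mem l (one_mem 𝒜))) _
            (sub_mem hy (SMulMemClass.smul_mem m (one_mem 𝒜)))
        have hsplit : x + y - (l + m) • (1 : M) = (x - l • 1) + (y - m • 1) := by
          rw [add_smul]; abel
        rw [hsplit]
        exact hcomm'.isNilpotent_add hl hm
    | mul x y hx hy ihx ihy =>
        obtain ⟨l, hl⟩ := ihx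
        obtain ⟨m, hm⟩ := ihy
        refine ⟨l * m, ?_⟩
        have m2 : y - m • 1 ∈ 𝒜 := sub_mem hy (SMulMemClass.smul_mem _ (one_mem 𝒜))
        have m1 : x * (y - m • 1) ∈ 𝒜 := mul_mem hx m2
        have m3 : x - l • 1 ∈ 𝒜 := sub_mem hx (SMulMemClass.smul_mem _ (one_mem 𝒜))
        have h1 : IsNilpotent (x * (y - m • 1)) :=
          (hC x hx _ m2).isNilpotent_mul_left hm
        have h2 : IsNilpotent (m • (x - l • (1 : M))) := hl.smul m
        have hcom : Commute (x * (y - m • 1)) (m • (x - l • (1 : M))) :=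
          (hC _ m1 _ m3).smul_right m
        have hdecomp : x * y - (l * m) • (1 : M) = x * (y - m • 1) + m • (x - l • 1) := by
          rw [mul_sub, smul_sub, mul_smul_comm, mul_one, smul_smul, mul_comm m l]
          abel
        rw [hdecomp]
        exact hcom.isNilpotent_add h1 h2
  have hnil : ∀ a ∈ 𝒜, IsNilpotent (a - φ a • (1 : M)) := by
    intro a ha
    obtain ⟨l, hl⟩ := hex a ha
    rwa [keyφ a l hl]
  have hφmul : ∀ a ∈ 𝒜, ∀ b ∈ 𝒜, φ (a * b) = φ a * φ b := by
    intro a ha b hb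
    have hNa := hnil a ha
    have hMb := hnil b hb
    have m1 : a - φ a • 1 ∈ 𝒜 := sub_mem ha (SMulMemClass.smul_mem _ (one_mem 𝒜))
    have m2 : b - φ b • 1 ∈ 𝒜 := sub_mem hb (SMulMemClass.smul_mem _ (one_mem 𝒜))
    have hNM : IsNilpotent ((a - φ a • 1) * (b - φ b • 1)) :=
      (hC _ m1 _ m2).isNilpotent_mul_left hMb
    have t3 : ((a - φ a • 1) * (b - φ b • 1)).trace = 0 :=
      (Matrix.isNilpotent_trace_of_isNilpotent hNM).eq_zero
    have hprod : (a - φ a • 1) * (b - φ b • 1)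
        = a * b - φ b • a - φ a • b + (φ a * φ b) • (1 : M) := by
      rw [sub_mul, mul_sub, mul_smul_comm, mul_one, smul_mul_assoc, one_mul, smul_sub,
        smul_smul]
      abel
    have hab : a * b = (a - φ a • 1) * (b - φ b • 1) + φ b • a + φ a • b
        - (φ a * φ b) • (1 : M) := by
      rw [hprod]; abel
    have htr : (a * b).trace = n * (φ a * φ b) := by
      rw [hab, Matrix.trace_sub, Matrix.trace_add, Matrix.trace_add, t3,
        Matrix.trace_smul, Matrix.trace_smul, Matrix.trace_smul, Matrix.trace_one,
        Stmt8Aux.trace_eq hNa, Stmt8Aux.trace_eq hMb]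
      simp [Fintype.card_fin, smul_eq_mul]
      ring
    show (a * b).trace / n = _
    rw [htr, mul_div_cancel_left₀ _ hnc]
  let χ : 𝒜 →ₐ[ℂ] ℂ :=
    { toFun := fun a => φ (a : M)
      map_one' := keyφ (1 : M) 1 (by rw [one_smul, sub_self]; exact IsNilpotent.zero)
      map_mul' := fun a b => hφmul a a.2 b b.2
      map_zero' := by
        show ((0 : 𝒜) : M).trace / (n : ℂ) = 0
        simp
      map_add' := fun a b => by
        show ((a : M) + b).trace / n = (a : M).trace / n + (b : M).trace / n
        rw [Matrix.trace_add, add_div]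
      commutes' := fun r => by
        refine keyφ _ r ?_
        rw [show ((algebraMap ℂ 𝒜 r : 𝒜) : M) = algebraMap ℂ M r from rfl,
          Algebra.algebraMap_eq_smul_one, sub_self]
        exact IsNilpotent.zero }
  let S' : LaurentSeries 𝒜 :=
    { coeff := fun i => ⟨S.coeff i, hmemS i⟩
      isPWO_support' := by
        refine S.isPWO_support'.mono fun i hi => ?_
        simp only [Function.mem_support] at hi ⊢
        intro h0
        exact hi (Subtype.ext h0) }
  have hSval : S'.map (𝒜.val) = S := by
    ext i
    rfl
  have hEq' : Polynomial.aeval S' q * lderiv S' = Polynomial.aeval S' p := by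
    apply Stmt8Aux.hmap_inj 𝒜.val Subtype.val_injective
    rw [Stmt8Aux.hmap_mul, Stmt8Aux.hmap_aeval, Stmt8Aux.hmap_aeval, Stmt8Aux.hmap_lderiv, hSval]
    exact heq
  have hf0 : S'.map χ = S0 := by
    ext i
    rw [HahnSeries.map_coeff]
    exact keyφ _ _ (hS0 i)
  have hEq0 : Polynomial.aeval S0 q * lderiv S0 = Polynomial.aeval S0 p := by
    have h2 := congrArg (fun X : LaurentSeries 𝒜 => X.map χ) hEq'
    try simp only [] at h2
    rw [Stmt8Aux.hmap_mul, Stmt8Aux.hmap_aeval, Stmt8Aux.hmap_aeval, Stmt8Aux.hmap_lderiv, hf0] at h2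
    rw [Stmt8Aux.aeval_bridge, Stmt8Aux.aeval_bridge] at h2
    exact h2
  exact Stmt8Aux.scalar_case p q hp hq S0 hne hord hEq0
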